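/- Fix maturities 0 ≤ s ≤ S ≤ T_k ≤ T, vectors v_k, u', v' ∈ ℝ^d and z ∈ ℝ. Set A_I := φ_{T−T_k}(v_k) − φ_{T−T_k}(u_k), B_I := ψ_{T−T_k}(v_k) − ψ_{T−T_k}(u_k), A' := φ_{T−S}(v') − φ_{T−S}(u') and B' := ψ_{T−S}(v') − ψ_{T−S}(u'). Assume X has the affine property at ψ_{T−T_k}(u_k) + z B_I and at ψ_{T_k−S}(ψ_{T−T_k}(u_k) + z B_I) − z B', and that (φ, ψ) satisfy the semiflow equations at u_k. Then, Q'-almost surely, E_{Q'}[exp( z(A_I + B_I·X_{T_k} − A' − B'·X_S) ) | ℱ_s] = exp( z A_I − z A' + φ_{T_k−S}(ψ_{T−T_k}(u_k) + z B_I) + φ_{S−s}(ψ_{T_k−S}(ψ_{T−T_k}(u_k) + z B_I) − z B') − φ_{T_k−s}(ψ_{T−T_k}(u_k)) + (ψ_{S−s}(ψ_{T_k−S}(ψ_{T−T_k}(u_k) + z B_I) − z B') − ψ_{T−s}(u_k))·X_s ). -/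

import Mathlib

open MeasureTheory Real Matrix
open scoped ENNReal NNReal

section Aux
lemma integrable_mul_of_condexp_eq {Ω : Type*} {m m0 : MeasurableSpace Ω} (hm : m ≤ m0)
    {μ : Measure Ω} [IsFiniteMeasure μ] {e g h : Ω → ℝ}
    (he : StronglyMeasurable[m] e) (he0 : ∀ ω, 0 ≤ e ω)
    (hg : Integrable g μ) (hg0 : ∀ ω, 0 ≤ g ω)
    (hh : Integrable h μ)
    (hbound : (fun ω => e ω * (μ[g|m]) ω) =ᵐ[μ] h) :
    Integrable (fun ω => e ω * g ω) μ := by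
  have hesm : AEStronglyMeasurable e μ := (he.mono hm).aestronglyMeasurable
  have hgm : AEStronglyMeasurable (fun ω => e ω * g ω) μ := hesm.mul hg.1
  have hcond_nn : 0 ≤ᵐ[μ] μ[g|m] := condExp_nonneg (Filter.Eventually.of_forall hg0)
  -- truncated versions
  have hemin : ∀ n : ℕ, StronglyMeasurable[m] (fun ω => min (e ω) n) := fun n =>
    (continuous_id.min continuous_const).comp_stronglyMeasurable he
  have hen : ∀ n : ℕ, Integrable (fun ω => min (e ω) (n : ℝ) * g ω) μ := by
    intro n
    refine hg.bdd_mul ((hemin n).mono hm).aestronglyMeasurable (c := n) (Filter.Eventually.of_forall fun ω => ?_)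
    rw [Real.norm_eq_abs, abs_of_nonneg (le_min (he0 ω) n.cast_nonneg)]
    exact min_le_right _ _
  have hkey : ∀ n : ℕ, ∫ ω, min (e ω) (n : ℝ) * g ω ∂μ ≤ ∫ ω, h ω ∂μ := by
    intro n
    have hpull : μ[(fun ω => min (e ω) (n : ℝ)) * g|m]
        =ᵐ[μ] (fun ω => min (e ω) (n : ℝ)) * μ[g|m] :=
      condExp_mul_of_stronglyMeasurable_left (hemin n) (hen n) hg
    have hminint : Integrable (fun ω => min (e ω) (n : ℝ) * (μ[g|m]) ω) μ := by
      refine integrable_condExp.bdd_mul ((hemin n).mono hm).aestronglyMeasurable (c := n) (Filter.Eventually.of_forall fun ω => ?_)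
      rw [Real.norm_eq_abs, abs_of_nonneg (le_min (he0 ω) n.cast_nonneg)]
      exact min_le_right _ _
    calc ∫ ω, min (e ω) (n : ℝ) * g ω ∂μ
        = ∫ ω, (μ[(fun ω => min (e ω) (n : ℝ)) * g|m]) ω ∂μ := (integral_condExp hm).symm
      _ = ∫ ω, min (e ω) (n : ℝ) * (μ[g|m]) ω ∂μ := integral_congr_ae hpull
      _ ≤ ∫ ω, h ω ∂μ := by
          refine integral_mono_ae hminint hh ?_
          filter_upwards [hbound, hcond_nn] with ω hb hnn
          calc min (e ω) (n : ℝ) * (μ[g|m]) ω ≤ e ω * (μ[g|m]) ω :=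
                mul_le_mul_of_nonneg_right (min_le_left _ _) hnn
            _ = h ω := hb
  refine ⟨hgm, ?_⟩
  rw [hasFiniteIntegral_iff_ofReal (Filter.Eventually.of_forall fun ω =>
    mul_nonneg (he0 ω) (hg0 ω))]
  have hmono : ∀ ω, Monotone fun n : ℕ => ENNReal.ofReal (min (e ω) n * g ω) := by
    intro ω n m hnm
    exact ENNReal.ofReal_le_ofReal (mul_le_mul_of_nonneg_right
      (min_le_min le_rfl (Nat.cast_le.mpr hnm)) (hg0 ω))
  have hsup : ∀ ω, (⨆ n : ℕ, ENNReal.ofReal (min (e ω) n * g ω))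
      = ENNReal.ofReal (e ω * g ω) := by
    intro ω
    refine le_antisymm (iSup_le fun n => ENNReal.ofReal_le_ofReal
      (mul_le_mul_of_nonneg_right (min_le_left _ _) (hg0 ω))) ?_
    have : min (e ω) (⌈e ω⌉₊ : ℝ) = e ω := min_eq_left (Nat.le_ceil _)
    exact le_trans (le_of_eq (by rw [this])) (le_iSup _ ⌈e ω⌉₊)
  calc ∫⁻ ω, ENNReal.ofReal (e ω * g ω) ∂μ
      = ∫⁻ ω, ⨆ n : ℕ, ENNReal.ofReal (min (e ω) n * g ω) ∂μ := by
        simp_rw [hsup]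
    _ = ⨆ n : ℕ, ∫⁻ ω, ENNReal.ofReal (min (e ω) n * g ω) ∂μ := by
        refine lintegral_iSup' (fun n => ?_) (Filter.Eventually.of_forall hmono)
        exact (ENNReal.measurable_ofReal.comp_aemeasurable ((hen n).1.aemeasurable))
    _ ≤ ENNReal.ofReal (∫ ω, h ω ∂μ) := by
        refine iSup_le fun n => ?_
        rw [← ofReal_integral_eq_lintegral_ofReal (hen n) (Filter.Eventually.of_forall
          fun ω => mul_nonneg (le_min (he0 ω) n.cast_nonneg) (hg0 ω))]
        exact ENNReal.ofReal_le_ofReal (hkey n)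
    _ < ⊤ := ENNReal.ofReal_lt_top

end Aux


/-- `X` has the affine property at `u` with exponent functions `φ, ψ`, with respect to the
filtration `ℱ`, the measure `Q` and the horizon `T`. -/
def AffineProperty {Ω : Type*} {m0 : MeasurableSpace Ω} {d : ℕ} (T : ℝ)
    (ℱ : MeasureTheory.Filtration ℝ m0) (Q : Measure Ω) (X : ℝ → Ω → (Fin d → ℝ))
    (φ : ℝ → (Fin d → ℝ) → ℝ) (ψ : ℝ → (Fin d → ℝ) → (Fin d → ℝ))
    (u : Fin d → ℝ) : Prop :=
  ∀ s t : ℝ, 0 ≤ s → s ≤ t → t ≤ T →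
    Integrable (fun ω => exp (u ⬝ᵥ X t ω)) Q ∧
    Q[fun ω => exp (u ⬝ᵥ X t ω)|ℱ s] =ᵐ[Q]
      fun ω => exp (φ (t - s) u + ψ (t - s) u ⬝ᵥ X s ω)

/-- `(φ, ψ)` satisfy the semiflow equations at the vector `v`, up to horizon `T`. -/
def Semiflow {d : ℕ} (T : ℝ) (φ : ℝ → (Fin d → ℝ) → ℝ)
    (ψ : ℝ → (Fin d → ℝ) → (Fin d → ℝ)) (v : Fin d → ℝ) : Prop :=
  (∀ s t : ℝ, 0 ≤ s → 0 ≤ t → t + s ≤ T →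
      φ (t + s) v = φ t v + φ s (ψ t v) ∧ ψ (t + s) v = ψ s (ψ t v)) ∧
    φ 0 v = 0 ∧ ψ 0 v = v

/-- The forward measure `Q'` defined by the density
`dQ'/dQ = exp (φ (T - Tk) uk + ψ (T - Tk) uk ⬝ᵥ X Tk) / exp (φ T uk + ψ T uk ⬝ᵥ x)`. -/
noncomputable def forwardMeasure {Ω : Type*} {m0 : MeasurableSpace Ω} {d : ℕ} (T : ℝ)
    (Q : Measure Ω) (X : ℝ → Ω → (Fin d → ℝ)) (x : Fin d → ℝ)
    (φ : ℝ → (Fin d → ℝ) → ℝ) (ψ : ℝ → (Fin d → ℝ) → (Fin d → ℝ))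
    (Tk : ℝ) (uk : Fin d → ℝ) : Measure Ω :=
  Q.withDensity (fun ω => ENNReal.ofReal
    (exp (φ (T - Tk) uk + ψ (T - Tk) uk ⬝ᵥ X Tk ω) / exp (φ T uk + ψ T uk ⬝ᵥ x)))


/-- The conditional moment generating function of the log realized inflation
`Y = z * (A_I + B_I ⬝ᵥ X Tk - A' - B' ⬝ᵥ X S)` under the forward measure `Q'`. -/
theorem forward_inflation_mgf
    {Ω : Type*} {m0 : MeasurableSpace Ω} {d : ℕ} (T : ℝ) (hT : 0 < T)
    (ℱ : MeasureTheory.Filtration ℝ m0) (Q : Measure Ω) [IsProbabilityMeasure Q]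
    (X : ℝ → Ω → (Fin d → ℝ)) (x : Fin d → ℝ)
    (hadapted : ∀ t : ℝ, 0 ≤ t → t ≤ T → Measurable[ℱ t] (X t))
    (hX0 : ∀ ω, X 0 ω = x)
    (φ : ℝ → (Fin d → ℝ) → ℝ) (ψ : ℝ → (Fin d → ℝ) → (Fin d → ℝ))
    (Tk : ℝ) (uk : Fin d → ℝ)
    (haffine_uk : AffineProperty T ℱ Q X φ ψ uk)
    (haffine_psi : AffineProperty T ℱ Q X φ ψ (ψ (T - Tk) uk))
    (s S : ℝ) (hs : 0 ≤ s) (hsS : s ≤ S) (hSTk : S ≤ Tk) (hTkT : Tk ≤ T)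
    (vk u' v' : Fin d → ℝ) (z : ℝ)
    (AI A' : ℝ) (BI B' : Fin d → ℝ)
    (hAI : AI = φ (T - Tk) vk - φ (T - Tk) uk)
    (hBI : BI = ψ (T - Tk) vk - ψ (T - Tk) uk)
    (hA' : A' = φ (T - S) v' - φ (T - S) u')
    (hB' : B' = ψ (T - S) v' - ψ (T - S) u')
    (haffine_z : AffineProperty T ℱ Q X φ ψ (ψ (T - Tk) uk + z • BI))
    (haffine_z' : AffineProperty T ℱ Q X φ ψ
      (ψ (Tk - S) (ψ (T - Tk) uk + z • BI) - z • B'))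
    (hsemiflow : Semiflow T φ ψ uk) :
    (forwardMeasure T Q X x φ ψ Tk uk)[fun ω =>
        exp (z * (AI + BI ⬝ᵥ X Tk ω - A' - B' ⬝ᵥ X S ω))|ℱ s]
      =ᵐ[forwardMeasure T Q X x φ ψ Tk uk]
    fun ω => exp (z * AI - z * A'
        + φ (Tk - S) (ψ (T - Tk) uk + z • BI)
        + φ (S - s) (ψ (Tk - S) (ψ (T - Tk) uk + z • BI) - z • B')
        - φ (Tk - s) (ψ (T - Tk) uk)
        + (ψ (S - s) (ψ (Tk - S) (ψ (T - Tk) uk + z • BI) - z • B') - ψ (T - s) uk)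
            ⬝ᵥ X s ω) := by

  classical
  obtain ⟨hsf, hφ0, hψ0⟩ := hsemiflow
  have hS0 : 0 ≤ S := hs.trans hsS
  have hTk0 : 0 ≤ Tk := hS0.trans hSTk
  have hST : S ≤ T := hSTk.trans hTkT
  have hsT : s ≤ T := hsS.trans hST
  have hsTk : s ≤ Tk := hsS.trans hSTk
  set ψTT : Fin d → ℝ := ψ (T - Tk) uk with hψTT
  set w1 : Fin d → ℝ := ψTT + z • BI with hw1
  set w2 : Fin d → ℝ := ψ (Tk - S) w1 - z • B' with hw2
  set Q' : Measure Ω := forwardMeasure T Q X x φ ψ Tk uk with hQ'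
  -- measurability helpers
  have hmX : ∀ t : ℝ, 0 ≤ t → t ≤ T → Measurable (X t) := fun t h1 h2 =>
    (hadapted t h1 h2).mono (ℱ.le t) le_rfl
  have hdot : ∀ (v : Fin d → ℝ) (t : ℝ) (m' : MeasurableSpace Ω),
      Measurable[m'] (X t) → Measurable[m'] fun ω => v ⬝ᵥ X t ω := by
    intro v t m' hX
    have h : ∀ i : Fin d, Measurable[m'] fun ω => v i * X t ω i := fun i =>
      ((measurable_pi_apply i).comp hX).const_mul (v i)
    simpa [dotProduct] using Finset.measurable_sum Finset.univ (fun i _ => h i)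
  have hexpSM : ∀ (K : ℝ) (v : Fin d → ℝ) (t : ℝ) (m' : MeasurableSpace Ω),
      Measurable[m'] (X t) → StronglyMeasurable[m'] fun ω => exp (K + v ⬝ᵥ X t ω) :=
    fun K v t m' hX => (((hdot v t m' hX).const_add K).exp).stronglyMeasurable
  -- semiflow consequence
  have hψsemi : ψ (T - s) uk = ψ (Tk - s) ψTT := by
    have h := (hsf (Tk - s) (T - Tk) (by linarith) (by linarith) (by linarith)).2
    rw [show T - Tk + (Tk - s) = T - s by ring] at h
    exact h
  -- the density
  set c : ℝ := exp (φ T uk + ψ T uk ⬝ᵥ x) with hcdef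
  have hcpos : (0:ℝ) < c := exp_pos _
  set D : Ω → ℝ := fun ω => exp (φ (T - Tk) uk + ψTT ⬝ᵥ X Tk ω) / c with hDdef
  have hD0 : ∀ ω, 0 ≤ D ω := fun ω => div_nonneg (exp_pos _).le hcpos.le
  have hDmeas : Measurable D :=
    (((hdot ψTT Tk m0 (hmX Tk hTk0 hTkT)).const_add (φ (T - Tk) uk)).exp).div_const c
  have hQ'def : Q' = Q.withDensity (fun ω => ((D ω).toNNReal : ℝ≥0∞)) := rfl
  -- affine property instantiations
  obtain ⟨hint1, hcond1⟩ := haffine_z S Tk hS0 hSTk hTkT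
  obtain ⟨hint2, hcond2⟩ := haffine_z' s S hs hsS hST
  obtain ⟨hint3, hcond3⟩ := haffine_psi s Tk hs hsTk hTkT
  have hintD : Integrable (fun ω => exp (ψTT ⬝ᵥ X Tk ω)) Q := (haffine_psi 0 Tk le_rfl hTk0 hTkT).1
  have hDint : Integrable D Q := by
    have hDeq : D = fun ω => (exp (φ (T - Tk) uk) / c) * exp (ψTT ⬝ᵥ X Tk ω) := by
      funext ω; simp only [hDdef]; rw [exp_add]; ring
    rw [hDeq]; exact hintD.const_mul _
  haveI hfin : IsFiniteMeasure Q' := by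
    rw [hQ'def]
    refine isFiniteMeasure_withDensity ?_
    have h1 : (fun ω => ((D ω).toNNReal : ℝ≥0∞)) = fun ω => ENNReal.ofReal (D ω) := rfl
    rw [h1, ← ofReal_integral_eq_lintegral_ofReal hDint (Filter.Eventually.of_forall hD0)]
    exact ENNReal.ofReal_ne_top
  haveI : SigmaFinite (Q'.trim (ℱ.le s)) := by
    haveI : IsFiniteMeasure (Q'.trim (ℱ.le s)) := isFiniteMeasure_trim (ℱ.le s)
    infer_instance
  -- the functions
  set Y : Ω → ℝ := fun ω => exp (z * (AI + BI ⬝ᵥ X Tk ω - A' - B' ⬝ᵥ X S ω)) with hYdef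
  set K : ℝ := z * AI - z * A' + φ (Tk - S) w1 + φ (S - s) w2 - φ (Tk - s) ψTT with hKdef
  set b : Fin d → ℝ := ψ (S - s) w2 - ψ (T - s) uk with hbdef
  set g : Ω → ℝ := fun ω => exp (K + b ⬝ᵥ X s ω) with hgdef
  -- step 1 : the product exp(-(z•B')⬝X_S) * exp(w1⬝X_Tk)
  set e1 : Ω → ℝ := fun ω => exp ((-(z • B')) ⬝ᵥ X S ω) with he1def
  have he1SM : StronglyMeasurable[(ℱ S : MeasurableSpace Ω)] e1 := by
    have h := hexpSM 0 (-(z • B')) S (ℱ S) (hadapted S hS0 hST)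
    simp only [zero_add] at h
    exact h
  have hb1 : (fun ω => e1 ω * (Q[fun ω => exp (w1 ⬝ᵥ X Tk ω)|ℱ S]) ω) =ᵐ[Q]
      fun ω => exp (φ (Tk - S) w1) * exp (w2 ⬝ᵥ X S ω) := by
    filter_upwards [hcond1] with ω hω
    simp only [he1def]
    rw [hω]
    simp only [← Real.exp_add]
    congr 1
    rw [hw2, sub_dotProduct, neg_dotProduct, smul_dotProduct]
    simp only [smul_eq_mul]
    ring
  have hbint : Integrable (fun ω => exp (φ (Tk - S) w1) * exp (w2 ⬝ᵥ X S ω)) Q :=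
    hint2.const_mul _
  have hE1int : Integrable (fun ω => e1 ω * exp (w1 ⬝ᵥ X Tk ω)) Q :=
    integrable_mul_of_condexp_eq (ℱ.le S) he1SM (fun ω => (exp_pos _).le) hint1
      (fun ω => (exp_pos _).le) hbint hb1
  have hcondE1 : Q[fun ω => e1 ω * exp (w1 ⬝ᵥ X Tk ω)|ℱ S] =ᵐ[Q]
      fun ω => exp (φ (Tk - S) w1) * exp (w2 ⬝ᵥ X S ω) := by
    have hpull := condExp_mul_of_stronglyMeasurable_left (μ := Q) he1SM hE1int hint1
    exact hpull.trans hb1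
  -- step 2 : tower to ℱ s
  have htower1 : Q[fun ω => e1 ω * exp (w1 ⬝ᵥ X Tk ω)|ℱ s] =ᵐ[Q]
      fun ω => exp (φ (Tk - S) w1) * exp (φ (S - s) w2 + ψ (S - s) w2 ⬝ᵥ X s ω) := by
    have h1 : Q[fun ω => e1 ω * exp (w1 ⬝ᵥ X Tk ω)|ℱ s]
        =ᵐ[Q] Q[Q[fun ω => e1 ω * exp (w1 ⬝ᵥ X Tk ω)|ℱ S]|ℱ s] :=
      (condExp_condExp_of_le (ℱ.mono hsS) (ℱ.le S)).symm
    have h2 := condExp_congr_ae (m := (ℱ s : MeasurableSpace Ω)) (μ := Q) hcondE1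
    have h3 : Q[fun ω => exp (φ (Tk - S) w1) * exp (w2 ⬝ᵥ X S ω)|ℱ s] =ᵐ[Q]
        fun ω => exp (φ (Tk - S) w1) * (Q[fun ω => exp (w2 ⬝ᵥ X S ω)|ℱ s]) ω := by
      have h4 := condExp_smul (m := (ℱ s : MeasurableSpace Ω)) (μ := Q)
        (exp (φ (Tk - S) w1)) (fun ω => exp (w2 ⬝ᵥ X S ω))
      simpa [smul_eq_mul, Pi.smul_def] using h4
    refine h1.trans (h2.trans (h3.trans ?_))
    filter_upwards [hcond2] with ω hω
    rw [hω]
  -- step 3 : Y * D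
  have hYD : (fun ω => Y ω * D ω) = fun ω =>
      (exp (z * AI - z * A' + φ (T - Tk) uk) / c) * (e1 ω * exp (w1 ⬝ᵥ X Tk ω)) := by
    funext ω
    simp only [hYdef, hDdef, he1def, hcdef, div_eq_mul_inv, ← Real.exp_neg, ← Real.exp_add]
    congr 1
    rw [hw1, add_dotProduct, neg_dotProduct, smul_dotProduct,
      smul_dotProduct]
    simp only [smul_eq_mul]
    ring
  have hYDint : Integrable (fun ω => Y ω * D ω) Q := by
    rw [hYD]; exact hE1int.const_mul _
  have hcondYD : Q[fun ω => Y ω * D ω|ℱ s] =ᵐ[Q] fun ω =>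
      (exp (z * AI - z * A' + φ (T - Tk) uk) / c) *
        (exp (φ (Tk - S) w1) * exp (φ (S - s) w2 + ψ (S - s) w2 ⬝ᵥ X s ω)) := by
    rw [hYD]
    have h4 := condExp_smul (m := (ℱ s : MeasurableSpace Ω)) (μ := Q)
      (exp (z * AI - z * A' + φ (T - Tk) uk) / c)
      (fun ω => e1 ω * exp (w1 ⬝ᵥ X Tk ω))
    have h4' : Q[fun ω => (exp (z * AI - z * A' + φ (T - Tk) uk) / c) *
        (e1 ω * exp (w1 ⬝ᵥ X Tk ω))|ℱ s] =ᵐ[Q] fun ω =>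
        (exp (z * AI - z * A' + φ (T - Tk) uk) / c) *
          (Q[fun ω => e1 ω * exp (w1 ⬝ᵥ X Tk ω)|ℱ s]) ω := by
      simpa [smul_eq_mul, Pi.smul_def] using h4
    refine h4'.trans ?_
    filter_upwards [htower1] with ω hω
    rw [hω]
  -- step 4 : D * g
  have hgSM : StronglyMeasurable[(ℱ s : MeasurableSpace Ω)] g :=
    hexpSM K b s (ℱ s) (hadapted s hs hsT)
  have hb3 : (fun ω => g ω * (Q[fun ω => exp (ψTT ⬝ᵥ X Tk ω)|ℱ s]) ω) =ᵐ[Q]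
      fun ω => exp (K + φ (Tk - s) ψTT - φ (S - s) w2) *
        exp (φ (S - s) w2 + ψ (S - s) w2 ⬝ᵥ X s ω) := by
    filter_upwards [hcond3] with ω hω
    simp only [hgdef]
    rw [hω]
    simp only [← Real.exp_add]
    congr 1
    rw [hbdef, sub_dotProduct, hψsemi]
    ring
  have hb3int : Integrable (fun ω =>
      exp (K + φ (Tk - s) ψTT - φ (S - s) w2) *
        exp (φ (S - s) w2 + ψ (S - s) w2 ⬝ᵥ X s ω)) Q :=
    (integrable_condExp.congr hcond2).const_mul _
  have hgE3int : Integrable (fun ω => g ω * exp (ψTT ⬝ᵥ X Tk ω)) Q :=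
    integrable_mul_of_condexp_eq (ℱ.le s) hgSM (fun ω => (exp_pos _).le) hint3
      (fun ω => (exp_pos _).le) hb3int hb3
  have hcondg3 : Q[fun ω => g ω * exp (ψTT ⬝ᵥ X Tk ω)|ℱ s] =ᵐ[Q]
      fun ω => exp (K + φ (Tk - s) ψTT - φ (S - s) w2) *
        exp (φ (S - s) w2 + ψ (S - s) w2 ⬝ᵥ X s ω) :=
    (condExp_mul_of_stronglyMeasurable_left (μ := Q) hgSM hgE3int hint3).trans hb3
  have hDg : (fun ω => D ω * g ω) = fun ω =>
      (exp (φ (T - Tk) uk) / c) * (g ω * exp (ψTT ⬝ᵥ X Tk ω)) := by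
    funext ω
    simp only [hDdef, hgdef, hcdef, div_eq_mul_inv, ← Real.exp_neg, ← Real.exp_add]
    congr 1
    ring
  have hDgint : Integrable (fun ω => D ω * g ω) Q := by
    rw [hDg]; exact hgE3int.const_mul _
  have hcondDg : Q[fun ω => D ω * g ω|ℱ s] =ᵐ[Q] fun ω =>
      (exp (φ (T - Tk) uk) / c) * (exp (K + φ (Tk - s) ψTT - φ (S - s) w2) *
        exp (φ (S - s) w2 + ψ (S - s) w2 ⬝ᵥ X s ω)) := by
    rw [hDg]
    have h4 := condExp_smul (m := (ℱ s : MeasurableSpace Ω)) (μ := Q)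
      (exp (φ (T - Tk) uk) / c) (fun ω => g ω * exp (ψTT ⬝ᵥ X Tk ω))
    have h4' : Q[fun ω => (exp (φ (T - Tk) uk) / c) * (g ω * exp (ψTT ⬝ᵥ X Tk ω))|ℱ s]
        =ᵐ[Q] fun ω => (exp (φ (T - Tk) uk) / c) *
          (Q[fun ω => g ω * exp (ψTT ⬝ᵥ X Tk ω)|ℱ s]) ω := by
      simpa [smul_eq_mul, Pi.smul_def] using h4
    refine h4'.trans ?_
    filter_upwards [hcondg3] with ω hω
    rw [hω]
  -- step 5 : the two conditional expectations agree
  have hkeyeq : (fun ω => (exp (φ (T - Tk) uk) / c) * (exp (K + φ (Tk - s) ψTT - φ (S - s) w2) *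
        exp (φ (S - s) w2 + ψ (S - s) w2 ⬝ᵥ X s ω)))
      = fun ω => (exp (z * AI - z * A' + φ (T - Tk) uk) / c) *
        (exp (φ (Tk - S) w1) * exp (φ (S - s) w2 + ψ (S - s) w2 ⬝ᵥ X s ω)) := by
    funext ω
    simp only [hcdef, div_eq_mul_inv, ← Real.exp_neg, ← Real.exp_add]
    congr 1
    rw [hKdef]
    ring
  have hcondeq : Q[fun ω => D ω * g ω|ℱ s] =ᵐ[Q] Q[fun ω => Y ω * D ω|ℱ s] := by
    refine hcondDg.trans ?_
    rw [hkeyeq]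
    exact hcondYD.symm
  -- step 6 : integrability under Q'
  have hDnn : Measurable fun ω => (D ω).toNNReal := hDmeas.real_toNNReal
  have hYQ' : Integrable Y Q' := by
    rw [hQ'def, integrable_withDensity_iff_integrable_smul hDnn]
    have : (fun ω => (D ω).toNNReal • Y ω) = fun ω => Y ω * D ω := by
      funext ω
      rw [NNReal.smul_def, smul_eq_mul, Real.coe_toNNReal _ (hD0 ω), mul_comm]
    rw [this]
    exact hYDint
  have hgQ' : Integrable g Q' := by
    rw [hQ'def, integrable_withDensity_iff_integrable_smul hDnn]
    have : (fun ω => (D ω).toNNReal • g ω) = fun ω => D ω * g ω := by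
      funext ω
      rw [NNReal.smul_def, smul_eq_mul, Real.coe_toNNReal _ (hD0 ω)]
    rw [this]
    exact hDgint
  -- step 7 : conclude via the characterization of the conditional expectation
  have hmain : g =ᵐ[Q'] Q'[Y|ℱ s] := by
    refine ae_eq_condExp_of_forall_setIntegral_eq (ℱ.le s) hYQ'
      (fun A hA hμA => hgQ'.integrableOn) (fun A hA hμA => ?_)
      hgSM.aestronglyMeasurable
    have hAm : MeasurableSet A := (ℱ.le s) A hA
    rw [hQ'def, setIntegral_withDensity_eq_setIntegral_smul hDnn _ hAm,
      setIntegral_withDensity_eq_setIntegral_smul hDnn _ hAm]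
    have e1eq : (fun ω => (D ω).toNNReal • g ω) = fun ω => D ω * g ω := by
      funext ω; rw [NNReal.smul_def, smul_eq_mul, Real.coe_toNNReal _ (hD0 ω)]
    have e2eq : (fun ω => (D ω).toNNReal • Y ω) = fun ω => Y ω * D ω := by
      funext ω; rw [NNReal.smul_def, smul_eq_mul, Real.coe_toNNReal _ (hD0 ω), mul_comm]
    calc ∫ ω in A, (D ω).toNNReal • g ω ∂Q
        = ∫ ω in A, D ω * g ω ∂Q := by rw [e1eq]
      _ = ∫ ω in A, (Q[fun ω => D ω * g ω|ℱ s]) ω ∂Q :=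
          (setIntegral_condExp (ℱ.le s) hDgint hA).symm
      _ = ∫ ω in A, (Q[fun ω => Y ω * D ω|ℱ s]) ω ∂Q :=
          integral_congr_ae (ae_restrict_of_ae hcondeq)
      _ = ∫ ω in A, Y ω * D ω ∂Q := setIntegral_condExp (ℱ.le s) hYDint hA
      _ = ∫ ω in A, (D ω).toNNReal • Y ω ∂Q := by rw [e2eq]
  exact hmain.symm
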